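/- New generalized Sylvester identity, odd case: for k odd with 0 ≤ k ≤ q, det(M_k) · (det M_0)^{(s-1)^k} = [Π over even i from 0 to k-1 of (det B_i)^{(s-1)^{k-1-i}}] / [Π over odd j from 1 to k-2 of (det B_j)^{(s-1)^{k-1-j}}]. -/

import Mathlib

open Matrix Finset

lemma sylv_aux {K : Type*} [Field K] {n m a s : ℕ}
    (M : Matrix (Fin n) (Fin m) K)
    (hs0 : 0 < s) (h1 : a + s ≤ n) (h2 : a + s ≤ m)
    (hA : (M.submatrix (Fin.castLE (by omega : a ≤ n))
           (Fin.castLE (by omega : a ≤ m))).det ≠ 0) :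
    (Matrix.of (fun i j : Fin s =>
      (M.submatrix
        (Fin.snoc (Fin.castLE (by omega : a ≤ n))
          (⟨a + (i : ℕ), by have := i.isLt; omega⟩ : Fin n))
        (Fin.snoc (Fin.castLE (by omega : a ≤ m))
          (⟨a + (j : ℕ), by have := j.isLt; omega⟩ : Fin m))).det)).det
    = (M.submatrix (Fin.castLE h1) (Fin.castLE h2)).det *
      ((M.submatrix (Fin.castLE (by omega : a ≤ n))
         (Fin.castLE (by omega : a ≤ m))).det) ^ (s - 1) := by
  have h1' : a ≤ n := by omega
  have h2' : a ≤ m := by omega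
  set A : Matrix (Fin a) (Fin a) K :=
    M.submatrix (Fin.castLE h1') (Fin.castLE h2') with hAdef
  set Bb : Matrix (Fin a) (Fin s) K :=
    fun l j => M (Fin.castLE h1' l) (⟨a + (j : ℕ), by have := j.isLt; omega⟩ : Fin m) with hBdef
  set Cc : Matrix (Fin s) (Fin a) K :=
    fun i l => M (⟨a + (i : ℕ), by have := i.isLt; omega⟩ : Fin n) (Fin.castLE h2' l) with hCdef
  set D : Matrix (Fin s) (Fin s) K :=
    fun i j => M (⟨a + (i : ℕ), by have := i.isLt; omega⟩ : Fin n)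
      (⟨a + (j : ℕ), by have := j.isLt; omega⟩ : Fin m) with hDdef
  haveI : Invertible A := A.invertibleOfIsUnitDet (hA.isUnit)
  set S : Matrix (Fin s) (Fin s) K := D - Cc * ⅟A * Bb with hSdef
  -- the big determinant
  have hbig : (M.submatrix (Fin.castLE h1) (Fin.castLE h2)).det = A.det * S.det := by
    rw [← Matrix.det_submatrix_equiv_self (finSumFinEquiv (m := a) (n := s))]
    have : (M.submatrix (Fin.castLE h1) (Fin.castLE h2)).submatrix
        finSumFinEquiv finSumFinEquiv = Matrix.fromBlocks A Bb Cc D := by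
      ext i j
      cases i <;> cases j <;>
        simp [Matrix.fromBlocks, Matrix.submatrix, hAdef, hBdef, hCdef, hDdef,
          Fin.castLE, Fin.ext_iff]
    rw [this, Matrix.det_fromBlocks₁₁]
  -- each bordered minor
  have hmin : ∀ i j : Fin s,
      (M.submatrix
        (Fin.snoc (Fin.castLE (by omega : a ≤ n))
          (⟨a + (i : ℕ), by have := i.isLt; omega⟩ : Fin n))
        (Fin.snoc (Fin.castLE (by omega : a ≤ m))
          (⟨a + (j : ℕ), by have := j.isLt; omega⟩ : Fin m))).det = A.det * S i j := by
    intro i j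
    rw [← Matrix.det_submatrix_equiv_self (finSumFinEquiv (m := a) (n := 1))]
    have : ((M.submatrix
        (Fin.snoc (Fin.castLE (by omega : a ≤ n))
          (⟨a + (i : ℕ), by have := i.isLt; omega⟩ : Fin n))
        (Fin.snoc (Fin.castLE (by omega : a ≤ m))
          (⟨a + (j : ℕ), by have := j.isLt; omega⟩ : Fin m)))).submatrix
        finSumFinEquiv finSumFinEquiv
      = Matrix.fromBlocks A (fun l (_ : Fin 1) => Bb l j) (fun (_ : Fin 1) l => Cc i l)
          (fun (_ _ : Fin 1) => D i j) := by
      ext x y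
      cases x <;> cases y <;>
        simp [Matrix.fromBlocks, Matrix.submatrix, hAdef, hBdef, hCdef, hDdef,
          Fin.snoc, Fin.castLE, Fin.ext_iff]
    rw [this]
    refine (Matrix.det_fromBlocks₁₁ _ _ _ _).trans ?_
    rw [Matrix.det_fin_one]
    congr 1
  have : (Matrix.of (fun i j : Fin s =>
      (M.submatrix
        (Fin.snoc (Fin.castLE (by omega : a ≤ n))
          (⟨a + (i : ℕ), by have := i.isLt; omega⟩ : Fin n))
        (Fin.snoc (Fin.castLE (by omega : a ≤ m))
          (⟨a + (j : ℕ), by have := j.isLt; omega⟩ : Fin m))).det)) = A.det • S := by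
    ext i j
    simp [hmin i j]
  rw [this, Matrix.det_smul, hbig]
  obtain ⟨s', rfl⟩ : ∃ s', s = s' + 1 := ⟨s - 1, by omega⟩
  simp [pow_succ]
  ring

private lemma det_castLE_congr {K : Type*} [Field K] {n m : ℕ}
    (M : Matrix (Fin n) (Fin m) K) {a b : ℕ} (h : a = b)
    (h1 : a ≤ n) (h2 : a ≤ m) (h1' : b ≤ n) (h2' : b ≤ m) :
    (M.submatrix (Fin.castLE h1) (Fin.castLE h2)).det =
    (M.submatrix (Fin.castLE h1') (Fin.castLE h2')).det := by
  subst h; rfl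

/-- New generalized Sylvester identity, odd case.  Here `Mk k` denotes the
determinant of the leading principal submatrix of `M` of order `t + k·s`, and
`B k` the determinant of the `s×s` matrix of bordered minors of orders
`t + k·s + 1` (rows `1,…,t+ks,t+ks+i`, columns `1,…,t+ks,t+ks+j`).  The
relevant determinants appearing in denominators are assumed nonzero. -/
theorem new_sylvester_odd {K : Type*} [Field K] {n m t s q : ℕ}
    (M : Matrix (Fin n) (Fin m) K)
    (ht : 0 < t) (hs1 : 1 ≤ s) (hs : s ≤ min (n - t) (m - t))
    (hr : min n m = t + q * s)
    (Mk B : ℕ → K)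
    (hMk : ∀ k, k ≤ q → ∀ (h1 : t + k * s ≤ n) (h2 : t + k * s ≤ m),
      Mk k = (M.submatrix (Fin.castLE h1) (Fin.castLE h2)).det)
    (hB : ∀ k, k < q → ∀ (h1 : t + k * s + s ≤ n) (h2 : t + k * s + s ≤ m),
      B k = (Matrix.of (fun i j : Fin s =>
        (M.submatrix
          (Fin.snoc (Fin.castLE (by omega : t + k * s ≤ n))
            (⟨t + k * s + (i : ℕ), by have := i.isLt; omega⟩ : Fin n))
          (Fin.snoc (Fin.castLE (by omega : t + k * s ≤ m))
            (⟨t + k * s + (j : ℕ), by have := j.isLt; omega⟩ : Fin m))).det)).det)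
    (hM0 : Mk 0 ≠ 0) (hBne : ∀ k, k < q → B k ≠ 0)
    (k : ℕ) (hk : k ≤ q) (hko : Odd k) :
    Mk k * (Mk 0) ^ ((s - 1) ^ k) =
      (∏ i ∈ (Finset.range k).filter (fun i => Even i), (B i) ^ ((s - 1) ^ (k - 1 - i))) /
      (∏ j ∈ (Finset.range (k - 1)).filter (fun j => Odd j), (B j) ^ ((s - 1) ^ (k - 1 - j))) := by
  have hn : t + q * s ≤ n := by omega
  have hm : t + q * s ≤ m := by omega
  -- the key recurrence coming from the generalized Sylvester identity
  have hrec : ∀ j, j < q → Mk j ≠ 0 → B j = Mk (j + 1) * Mk j ^ (s - 1) := by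
    intro j hj hMj
    have hmul : j * s + s ≤ q * s := by
      have h := Nat.mul_le_mul_right s (show j + 1 ≤ q by omega)
      simpa [Nat.succ_mul] using h
    have h1 : t + j * s + s ≤ n := by linarith
    have h2 : t + j * s + s ≤ m := by linarith
    have h1' : t + (j + 1) * s ≤ n := by nlinarith
    have h2' : t + (j + 1) * s ≤ m := by nlinarith
    have e : t + (j + 1) * s = t + j * s + s := by ring
    have hAeq : Mk j = (M.submatrix (Fin.castLE (by omega : t + j * s ≤ n))
        (Fin.castLE (by omega : t + j * s ≤ m))).det :=
      hMk j (by omega) _ _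
    have hMk1 : Mk (j + 1) = (M.submatrix (Fin.castLE h1) (Fin.castLE h2)).det := by
      rw [hMk (j + 1) (by omega) h1' h2']
      exact det_castLE_congr M e _ _ _ _
    rw [hB j hj h1 h2, hMk1, hAeq]
    exact sylv_aux M (by omega) h1 h2 (hAeq ▸ hMj)
  set E : ℕ → K := fun k =>
    ∏ i ∈ (Finset.range k).filter (fun i => Even i), (B i) ^ ((s - 1) ^ (k - 1 - i)) with hE
  set O : ℕ → K := fun k =>
    ∏ j ∈ (Finset.range k).filter (fun j => Odd j), (B j) ^ ((s - 1) ^ (k - 1 - j)) with hO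
  have hEpow : ∀ j, E (j + 1) = (if Even j then B j else 1) * E j ^ (s - 1) := by
    intro j
    rw [hE]
    simp only [Finset.range_add_one, Finset.filter_insert]
    rw [← Finset.prod_pow]
    have hp : ∀ i ∈ (Finset.range j).filter (fun i => Even i),
        B i ^ ((s - 1) ^ (j + 1 - 1 - i)) = (B i ^ ((s - 1) ^ (j - 1 - i))) ^ (s - 1) := by
      intro i hi
      simp only [Finset.mem_filter, Finset.mem_range] at hi
      rw [← pow_mul, ← pow_succ]
      congr 2
      omega
    by_cases hj : Even j
    · rw [if_pos hj, if_pos hj, Finset.prod_insert (by simp), Finset.prod_congr rfl hp]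
      simp
    · rw [if_neg hj, if_neg hj, Finset.prod_congr rfl hp, one_mul]
  have hOpow : ∀ j, O (j + 1) = (if Odd j then B j else 1) * O j ^ (s - 1) := by
    intro j
    rw [hO]
    simp only [Finset.range_add_one, Finset.filter_insert]
    rw [← Finset.prod_pow]
    have hp : ∀ i ∈ (Finset.range j).filter (fun i => Odd i),
        B i ^ ((s - 1) ^ (j + 1 - 1 - i)) = (B i ^ ((s - 1) ^ (j - 1 - i))) ^ (s - 1) := by
      intro i hi
      simp only [Finset.mem_filter, Finset.mem_range] at hi
      rw [← pow_mul, ← pow_succ]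
      congr 2
      omega
    by_cases hj : Odd j
    · rw [if_pos hj, if_pos hj, Finset.prod_insert (by simp), Finset.prod_congr rfl hp]
      simp
    · rw [if_neg hj, if_neg hj, Finset.prod_congr rfl hp, one_mul]
  -- main induction
  have key : ∀ j, j ≤ q → Mk j ≠ 0 ∧
      (Even j → Mk j * E j = Mk 0 ^ ((s - 1) ^ j) * O j) ∧
      (Odd j → Mk j * Mk 0 ^ ((s - 1) ^ j) * O j = E j) := by
    intro j
    induction j with
    | zero =>
      intro _
      refine ⟨hM0, fun _ => ?_, fun h => absurd h (by decide)⟩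
      simp [hE, hO]
    | succ j ih =>
      intro hj
      obtain ⟨hMj, heven, hodd⟩ := ih (by omega)
      have hjq : j < q := by omega
      have hBj := hrec j hjq hMj
      have hMj1 : Mk (j + 1) ≠ 0 := by
        intro h
        exact hBne j hjq (by rw [hBj, h, zero_mul])
      refine ⟨hMj1, ?_, ?_⟩
      · intro hej1
        have hoj : Odd j := by
          have := Nat.even_iff.mp hej1
          exact Nat.odd_iff.mpr (by omega)
        have h := congrArg (· ^ (s - 1)) (hodd hoj)
        simp only [mul_pow, ← pow_mul, ← pow_succ] at h
        rw [hEpow, hOpow, if_neg (Nat.not_even_iff_odd.mpr hoj), if_pos hoj, hBj]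
        linear_combination (-(Mk (j + 1))) * h
      · intro hoj1
        have hej : Even j := by
          have := Nat.odd_iff.mp hoj1
          exact Nat.even_iff.mpr (by omega)
        have h := congrArg (· ^ (s - 1)) (heven hej)
        simp only [mul_pow, ← pow_mul, ← pow_succ] at h
        rw [hEpow, hOpow, if_pos hej, if_neg (Nat.not_odd_iff_even.mpr hej), hBj]
        linear_combination (-(Mk (j + 1))) * h
  obtain ⟨-, -, hoddk⟩ := key k hk
  have hfin := hoddk hko
  have hOne : O k ≠ 0 := by
    rw [hO]
    refine Finset.prod_ne_zero_iff.mpr fun i hi => ?_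
    simp only [Finset.mem_filter, Finset.mem_range] at hi
    exact pow_ne_zero _ (hBne i (by omega))
  have hset : (Finset.range (k - 1)).filter (fun j => Odd j) =
      (Finset.range k).filter (fun j => Odd j) := by
    ext i
    simp only [Finset.mem_filter, Finset.mem_range]
    constructor
    · rintro ⟨h, ho⟩; exact ⟨by omega, ho⟩
    · rintro ⟨h, ho⟩
      refine ⟨?_, ho⟩
      have h1 := Nat.odd_iff.mp ho
      have h2 := Nat.odd_iff.mp hko
      omega
  rw [hset, eq_div_iff hOne]
  exact hfin
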